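/- For any i, j, l, m ∈ ℤ≥0 and real coefficients a^k_{l,m}, b^k_{l,m}, a^k_{i,j}, b^k_{i,j} (k = 1,2), the Lie bracket of the vector fields U = Σ_k (a^k_{l,m} P^k_{l,m} + b^k_{l,m} R^k_{l,m}) and W = Σ_k (a^k_{i,j} P^k_{i,j} + b^k_{i,j} R^k_{i,j}) satisfies (1/2)[U, W] = Σ_k ((i a¹_{l,m} + j a²_{l,m}) a^k_{i,j} − (l a¹_{i,j} + m a²_{i,j}) a^k_{l,m}) P^k_{i+l, j+m} + Σ_k ((i a¹_{l,m} + j a²_{l,m}) b^k_{i,j} − (l a¹_{i,j} + m a²_{i,j}) b^k_{l,m}) R^k_{i+l, j+m}. -/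
import Mathlib


open MvPolynomial

/-- Polynomials on ℂ⁴ with coordinates (z₁, w₁, z₂, w₂). -/
abbrev Poly4 : Type := MvPolynomial (Fin 4) ℂ

/-- Polynomial vector fields on ℂ⁴, identified with their component polynomials. -/
abbrev VF : Type := Fin 4 → Poly4

/-- Action of a vector field on a polynomial (as a derivation). -/
noncomputable def vAct (v : VF) (p : Poly4) : Poly4 := ∑ i, v i * pderiv i p

/-- Lie bracket of vector fields, [v,w] = vw − wv as differential operators. -/
noncomputable def vBr (v w : VF) : VF := fun k => vAct v (w k) - vAct w (v k)

/-- The monomial (z₁w₁)^m (z₂w₂)^n, i.e. |z₁|^{2m}|z₂|^{2n}. -/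
noncomputable def mon (m n : ℕ) : Poly4 := (X 0 * X 1) ^ m * (X 2 * X 3) ^ n

/-- Planar-radial vector field P¹_{m,n} = (z₁w₁)^m (z₂w₂)^n (z₁ ∂/∂z₁ + w₁ ∂/∂w₁). -/
noncomputable def P1 (m n : ℕ) : VF := fun k => mon m n * ![X 0, X 1, 0, 0] k

/-- Planar-radial vector field P²_{m,n} = (z₁w₁)^m (z₂w₂)^n (z₂ ∂/∂z₂ + w₂ ∂/∂w₂). -/
noncomputable def P2 (m n : ℕ) : VF := fun k => mon m n * ![0, 0, X 2, X 3] k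

/-- Planar-rotating vector field R¹_{m,n} = (z₁w₁)^m (z₂w₂)^n (I z₁ ∂/∂z₁ − I w₁ ∂/∂w₁). -/
noncomputable def R1 (m n : ℕ) : VF :=
  fun k => mon m n * ![C Complex.I * X 0, -(C Complex.I) * X 1, 0, 0] k

/-- Planar-rotating vector field R²_{m,n} = (z₁w₁)^m (z₂w₂)^n (I z₂ ∂/∂z₂ − I w₂ ∂/∂w₂). -/
noncomputable def R2 (m n : ℕ) : VF :=
  fun k => mon m n * ![0, 0, C Complex.I * X 2, -(C Complex.I) * X 3] k

lemma mon_succ_left (i j : ℕ) : mon (i+1) j = (X 0 * X 1) * mon i j := by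
  simp [mon, pow_succ]; ring

lemma mon_succ_right (i j : ℕ) : mon i (j+1) = (X 2 * X 3) * mon i j := by
  simp [mon, pow_succ]; ring

lemma pderiv_pow_eq_zero {k : Fin 4} {a : Poly4} (h : pderiv k a = 0) (n : ℕ) :
    pderiv k (a ^ n) = 0 := by
  rw [Derivation.leibniz_pow, h]; simp

lemma pd0 (i j : ℕ) : pderiv 0 (mon i j) * X 0 = C (i:ℂ) * mon i j := by
  induction i with
  | zero =>
    simp only [mon, pow_zero, one_mul, Nat.cast_zero, map_zero, zero_mul]
    rw [pderiv_pow_eq_zero (by simp [pderiv_mul, pderiv_X_of_ne,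
      (by decide : (0:Fin 4) ≠ 2), (by decide : (0:Fin 4) ≠ 3)]) j, zero_mul]
  | succ t ih =>
    rw [mon_succ_left, pderiv_mul,
      show pderiv (0 : Fin 4) (X 0 * X 1 : Poly4) = X 1 by
        simp [pderiv_mul, pderiv_X_of_ne (by decide : (0:Fin 4) ≠ 1)]]
    simp only [Nat.cast_succ, map_add, map_one]
    linear_combination (X 0 * X 1 : Poly4) * ih

lemma pd1 (i j : ℕ) : pderiv 1 (mon i j) * X 1 = C (i:ℂ) * mon i j := by
  induction i with
  | zero =>
    simp only [mon, pow_zero, one_mul, Nat.cast_zero, map_zero, zero_mul]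
    rw [pderiv_pow_eq_zero (by simp [pderiv_mul, pderiv_X_of_ne,
      (by decide : (1:Fin 4) ≠ 2), (by decide : (1:Fin 4) ≠ 3)]) j, zero_mul]
  | succ t ih =>
    rw [mon_succ_left, pderiv_mul,
      show pderiv (1 : Fin 4) (X 0 * X 1 : Poly4) = X 0 by
        simp [pderiv_mul, pderiv_X_of_ne (by decide : (1:Fin 4) ≠ 0)]]
    simp only [Nat.cast_succ, map_add, map_one]
    linear_combination (X 0 * X 1 : Poly4) * ih

lemma pd2 (i j : ℕ) : pderiv 2 (mon i j) * X 2 = C (j:ℂ) * mon i j := by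
  induction j with
  | zero =>
    simp only [mon, pow_zero, mul_one, Nat.cast_zero, map_zero, zero_mul]
    rw [pderiv_pow_eq_zero (by simp [pderiv_mul, pderiv_X_of_ne,
      (by decide : (2:Fin 4) ≠ 0), (by decide : (2:Fin 4) ≠ 1)]) i, zero_mul]
  | succ t ih =>
    rw [mon_succ_right, pderiv_mul,
      show pderiv (2 : Fin 4) (X 2 * X 3 : Poly4) = X 3 by
        simp [pderiv_mul, pderiv_X_of_ne (by decide : (2:Fin 4) ≠ 3)]]
    simp only [Nat.cast_succ, map_add, map_one]
    linear_combination (X 2 * X 3 : Poly4) * ih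

lemma pd3 (i j : ℕ) : pderiv 3 (mon i j) * X 3 = C (j:ℂ) * mon i j := by
  induction j with
  | zero =>
    simp only [mon, pow_zero, mul_one, Nat.cast_zero, map_zero, zero_mul]
    rw [pderiv_pow_eq_zero (by simp [pderiv_mul, pderiv_X_of_ne,
      (by decide : (3:Fin 4) ≠ 0), (by decide : (3:Fin 4) ≠ 1)]) i, zero_mul]
  | succ t ih =>
    rw [mon_succ_right, pderiv_mul,
      show pderiv (3 : Fin 4) (X 2 * X 3 : Poly4) = X 2 by
        simp [pderiv_mul, pderiv_X_of_ne (by decide : (3:Fin 4) ≠ 2)]]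
    simp only [Nat.cast_succ, map_add, map_one]
    linear_combination (X 2 * X 3 : Poly4) * ih

lemma mon_add (i j l m : ℕ) : mon i j * mon l m = mon (i+l) (j+m) := by
  simp [mon, pow_add]; ring

lemma vAct_mul (v : VF) (p q : Poly4) :
    vAct v (p * q) = vAct v p * q + p * vAct v q := by
  simp only [vAct, pderiv_mul, mul_add, Finset.sum_add_distrib, Finset.sum_mul,
    Finset.mul_sum]
  congr 1 <;> (apply Finset.sum_congr rfl; intro x _; ring)

lemma vAct_C_mul (v : VF) (a : ℂ) (p : Poly4) :
    vAct v (C a * p) = C a * vAct v p := by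
  simp only [vAct, pderiv_mul, pderiv_C, Finset.mul_sum]
  apply Finset.sum_congr rfl; intro x _; ring

lemma vAct_X (v : VF) (k : Fin 4) : vAct v (X k) = v k := by
  fin_cases k <;>
    simp [vAct, Fin.sum_univ_four, pderiv_X]

noncomputable def D (c : Fin 4 → ℂ) (l m : ℕ) : VF := fun k => mon l m * (C (c k) * X k)

lemma vAct_D_mon (c : Fin 4 → ℂ) (l m i j : ℕ) :
    vAct (D c l m) (mon i j)
      = C ((i:ℂ) * (c 0 + c 1) + (j:ℂ) * (c 2 + c 3)) * mon (i+l) (j+m) := by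
  simp only [vAct, Fin.sum_univ_four, D, map_add, map_mul]
  linear_combination (mon l m * C (c 0)) * pd0 i j + (mon l m * C (c 1)) * pd1 i j
    + (mon l m * C (c 2)) * pd2 i j + (mon l m * C (c 3)) * pd3 i j
    + (C (i:ℂ) * (C (c 0) + C (c 1)) + C (j:ℂ) * (C (c 2) + C (c 3))) * mon_add i j l m

lemma vAct_form (v : VF) (i j : ℕ) (a : ℂ) (k : Fin 4) :
    vAct v (mon i j * (C a * X k))
      = vAct v (mon i j) * (C a * X k) + mon i j * (C a * v k) := by
  rw [mul_left_comm, vAct_C_mul, vAct_mul, vAct_X]; ring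

lemma vBr_D (c d : Fin 4 → ℂ) (l m i j : ℕ) :
    vBr (D c l m) (D d i j)
      = D (fun k => ((i:ℂ) * (c 0 + c 1) + (j:ℂ) * (c 2 + c 3)) * d k
          - ((l:ℂ) * (d 0 + d 1) + (m:ℂ) * (d 2 + d 3)) * c k) (i+l) (j+m) := by
  funext k
  show vAct (D c l m) (mon i j * (C (d k) * X k))
      - vAct (D d i j) (mon l m * (C (c k) * X k)) = _
  rw [vAct_form, vAct_form, vAct_D_mon, vAct_D_mon]
  show _ = mon (i+l) (j+m) * (C _ * X k)
  simp only [D, map_add, map_sub, map_mul]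
  rw [show l + i = i + l from by ring, show m + j = j + m from by ring]
  ring

lemma real_smul (r : ℝ) (p : Poly4) : r • p = C (r:ℂ) * p := by
  rw [← algebraMap_smul ℂ r p, smul_eq_C_mul]
  norm_num

lemma combo (a1 a2 b1 b2 : ℝ) (l m : ℕ) :
    a1 • P1 l m + a2 • P2 l m + b1 • R1 l m + b2 • R2 l m
      = D ![(a1:ℂ) + Complex.I * b1, (a1:ℂ) - Complex.I * b1,
            (a2:ℂ) + Complex.I * b2, (a2:ℂ) - Complex.I * b2] l m := by
  funext k
  fin_cases k <;>
  · simp [Pi.add_apply, Pi.smul_apply, P1, P2, R1, R2, D,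
      real_smul, map_add, map_sub, map_mul, -smul_eq_mul]
    ring

/-- The general structure-constant identity for the bracket of two grade-homogeneous
elements U = Σ_k (a^k_{l,m} P^k_{l,m} + b^k_{l,m} R^k_{l,m}) and
W = Σ_k (a^k_{i,j} P^k_{i,j} + b^k_{i,j} R^k_{i,j}). -/
theorem structure_constants_general (i j l m : ℕ)
    (a1lm a2lm b1lm b2lm a1ij a2ij b1ij b2ij : ℝ) :
    vBr (a1lm • P1 l m + a2lm • P2 l m + b1lm • R1 l m + b2lm • R2 l m)
        (a1ij • P1 i j + a2ij • P2 i j + b1ij • R1 i j + b2ij • R2 i j)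
      = (2:ℝ) •
        ( (((i:ℝ) * a1lm + (j:ℝ) * a2lm) * a1ij - ((l:ℝ) * a1ij + (m:ℝ) * a2ij) * a1lm)
            • P1 (i+l) (j+m)
        + (((i:ℝ) * a1lm + (j:ℝ) * a2lm) * a2ij - ((l:ℝ) * a1ij + (m:ℝ) * a2ij) * a2lm)
            • P2 (i+l) (j+m)
        + (((i:ℝ) * a1lm + (j:ℝ) * a2lm) * b1ij - ((l:ℝ) * a1ij + (m:ℝ) * a2ij) * b1lm)
            • R1 (i+l) (j+m)
        + (((i:ℝ) * a1lm + (j:ℝ) * a2lm) * b2ij - ((l:ℝ) * a1ij + (m:ℝ) * a2ij) * b2lm)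
            • R2 (i+l) (j+m)) := by
  rw [combo, combo, combo, vBr_D]
  funext k
  fin_cases k <;>
  · simp [Pi.smul_apply, D,
      real_smul, Complex.ofReal_add, Complex.ofReal_mul, Complex.ofReal_sub,
      Complex.ofReal_natCast, Complex.ofReal_ofNat, map_add, map_sub, map_mul,
      map_natCast, map_ofNat, -smul_eq_mul]
    ring
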